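/- Let K ⊂ E be a compact product with equilibrium state μ and let φ be a Hausdorff function with 0 < D̄ := limsup_{ε→0} μ(B(x,ε))/φ(ε) < ∞. Then for every ball B ⊂ K of radius r > 0, H^φ(B) = H^φ(K) · μ(B). -/

import Mathlib

open scoped Classical ENNReal
open Filter Topology MeasureTheory

/-- The minimal index (counting from 1) at which two elements of the compact product
`K = ∏_k {1,…,n k}` differ. -/
noncomputable def chiK {n : ℕ → ℕ} (x y : ∀ k, Fin (n k)) : ℕ := sInf {k | x k ≠ y k} + 1

/-- The ultrametric `δ(x,y) = 2^{-χ(x,y)}` on the compact product. -/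
noncomputable def deltaK {n : ℕ → ℕ} (x y : ∀ k, Fin (n k)) : ℝ :=
  if x = y then 0 else (2 : ℝ) ^ (-(chiK x y : ℤ))

/-- The open `δ`-ball of center `x` and radius `ε`. -/
def BallK {n : ℕ → ℕ} (x : ∀ k, Fin (n k)) (ε : ℝ) : Set (∀ k, Fin (n k)) :=
  {y | deltaK x y < ε}

/-- The equilibrium state: the product of the uniform probability measures, characterized
by its values on cylinders. -/
def IsEquilibrium {n : ℕ → ℕ} (μ : Measure (∀ k, Fin (n k))) : Prop :=
  ∀ (k : ℕ) (s : ∀ j, Fin (n j)),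
    μ {y | ∀ j < k, y j = s j} = ∏ j ∈ Finset.range k, ((n j : ℝ≥0∞))⁻¹

/-- Hausdorff functions: continuous nondecreasing, vanishing exactly at `0`. -/
def IsHausdorffFn (φ : ℝ → ℝ) : Prop :=
  ContinuousOn φ (Set.Ici 0) ∧ MonotoneOn φ (Set.Ici 0) ∧ φ 0 = 0 ∧ ∀ ε > 0, 0 < φ ε

/-- The upper `φ`-density of `μ` at `x`. -/
noncomputable def upperDensK {n : ℕ → ℕ} (μ : Measure (∀ k, Fin (n k))) (φ : ℝ → ℝ)
    (x : ∀ k, Fin (n k)) : ℝ≥0∞ :=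
  Filter.limsup (fun ε : ℝ => μ (BallK x ε) / ENNReal.ofReal (φ ε)) (𝓝[>] 0)

/-- The lower `φ`-density of `μ` at `x`. -/
noncomputable def lowerDensK {n : ℕ → ℕ} (μ : Measure (∀ k, Fin (n k))) (φ : ℝ → ℝ)
    (x : ∀ k, Fin (n k)) : ℝ≥0∞ :=
  Filter.liminf (fun ε : ℝ => μ (BallK x ε) / ENNReal.ofReal (φ ε)) (𝓝[>] 0)

/-- The `φ`-Hausdorff measure on the compact product, defined via countable covers by
open balls of radii at most `ε`, letting `ε → 0`. -/
noncomputable def HK {n : ℕ → ℕ} (φ : ℝ → ℝ) (S : Set (∀ k, Fin (n k))) : ℝ≥0∞ :=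
  ⨆ (ε : ℝ) (_ : 0 < ε),
    ⨅ (c : ℕ → (∀ k, Fin (n k)) × ℝ)
      (_ : (∀ i, 0 ≤ (c i).2 ∧ (c i).2 ≤ ε) ∧ S ⊆ ⋃ i, BallK (c i).1 (c i).2),
      ∑' i, ENNReal.ofReal (φ (c i).2)

/-- The `φ`-packing premeasure on the compact product, defined via countable packs by
disjoint open balls centered in the set, of radii at most `ε`, letting `ε → 0`. -/
noncomputable def PK0 {n : ℕ → ℕ} (φ : ℝ → ℝ) (S : Set (∀ k, Fin (n k))) : ℝ≥0∞ :=
  ⨅ (ε : ℝ) (_ : 0 < ε),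
    ⨆ (c : ℕ → (∀ k, Fin (n k)) × ℝ)
      (_ : (∀ i, (c i).1 ∈ S ∧ 0 ≤ (c i).2 ∧ (c i).2 ≤ ε) ∧
        Pairwise fun i j => Disjoint (BallK (c i).1 (c i).2) (BallK (c j).1 (c j).2)),
      ∑' i, ENNReal.ofReal (φ (c i).2)

/-- The `φ`-packing measure on the compact product. -/
noncomputable def PK {n : ℕ → ℕ} (φ : ℝ → ℝ) (S : Set (∀ k, Fin (n k))) : ℝ≥0∞ :=
  ⨅ (F : ℕ → Set (∀ k, Fin (n k))) (_ : S ⊆ ⋃ m, F m), ∑' m, PK0 φ (F m)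


section Aux
variable {n : ℕ → ℕ}

def cylSet (x : ∀ k, Fin (n k)) (k : ℕ) : Set (∀ k, Fin (n k)) := {y | ∀ j < k, y j = x j}

lemma diff_nonempty {x y : ∀ k, Fin (n k)} (h : x ≠ y) : {j | x j ≠ y j}.Nonempty := by
  by_contra hc
  exact h (funext fun j => not_not.1 fun hj => hc ⟨j, hj⟩)

lemma deltaK_lt_iff (x y : ∀ k, Fin (n k)) (k : ℕ) :
    deltaK x y < (2:ℝ)^(-(k:ℤ)) ↔ ∀ j < k, y j = x j := by
  rcases eq_or_ne x y with h | h
  · subst h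
    have h0 : deltaK x x = 0 := by simp [deltaK]
    rw [h0]
    simp only [eq_self_iff_true, implies_true, iff_true]
    positivity
  · rw [deltaK, if_neg h]
    have hd : sInf {j | x j ≠ y j} ∈ {j | x j ≠ y j} := Nat.sInf_mem (diff_nonempty h)
    set d := sInf {j | x j ≠ y j} with hdd
    have hchi : (-(chiK x y : ℤ)) = -((d:ℤ)+1) := by
      unfold chiK; rw [← hdd]; push_cast; ring
    rw [hchi, zpow_lt_zpow_iff_right₀ (by norm_num : (1:ℝ) < 2)]
    constructor
    · intro hlt j hj
      by_contra hne
      have h1 : d ≤ j := Nat.sInf_le (fun hh => hne hh.symm)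
      have h2 : (k:ℤ) ≤ d := by omega
      omega
    · intro hall
      have : k ≤ d := le_of_not_gt fun hk => hd (hall d hk).symm
      omega

lemma ballK_zpow (x : ∀ k, Fin (n k)) (k : ℕ) :
    BallK x ((2:ℝ)^(-(k:ℤ))) = cylSet x k := by
  ext y; exact deltaK_lt_iff x y k

lemma mem_ball_prefix {c y : ∀ k, Fin (n k)} {ρ : ℝ} {k : ℕ}
    (hρ : ρ ≤ (2:ℝ)^(-(k:ℤ))) (hy : y ∈ BallK c ρ) : ∀ j < k, y j = c j :=
  (deltaK_lt_iff c y k).1 (lt_of_lt_of_le hy hρ)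

/-- prefix replacement map -/
def pre (x' : ∀ k, Fin (n k)) (k : ℕ) (y : ∀ k, Fin (n k)) : ∀ k, Fin (n k) :=
  fun j => if j < k then x' j else y j

lemma deltaK_pre (x' : ∀ k, Fin (n k)) {k : ℕ} {y z : ∀ k, Fin (n k)}
    (hyz : ∀ j < k, y j = z j) : deltaK (pre x' k y) (pre x' k z) = deltaK y z := by
  have hset : {j | pre x' k y j ≠ pre x' k z j} = {j | y j ≠ z j} := by
    ext j
    by_cases h : j < k <;> simp [pre, h, hyz j]
  have heq : pre x' k y = pre x' k z ↔ y = z := by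
    simp only [funext_iff]
    constructor
    · intro H j
      by_cases h : j < k
      · exact hyz j h
      · simpa [pre, h] using H j
    · intro H j
      by_cases h : j < k <;> simp [pre, h, H j]
  unfold deltaK chiK
  rw [hset]
  by_cases h : y = z
  · rw [if_pos h, if_pos (heq.2 h)]
  · rw [if_neg h, if_neg (fun hh => h (heq.1 hh))]


noncomputable def infCover {n : ℕ → ℕ} (φ : ℝ → ℝ) (S : Set (∀ k, Fin (n k))) (ε : ℝ) : ℝ≥0∞ :=
  ⨅ (c : ℕ → (∀ k, Fin (n k)) × ℝ)
    (_ : (∀ i, 0 ≤ (c i).2 ∧ (c i).2 ≤ ε) ∧ S ⊆ ⋃ i, BallK (c i).1 (c i).2),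
    ∑' i, ENNReal.ofReal (φ (c i).2)

variable {n : ℕ → ℕ}

lemma HK_eq (φ : ℝ → ℝ) (S : Set (∀ k, Fin (n k))) :
    HK φ S = ⨆ (ε : ℝ) (_ : 0 < ε), infCover φ S ε := rfl

lemma infCover_anti (φ : ℝ → ℝ) (S : Set (∀ k, Fin (n k))) {ε ε' : ℝ} (h : ε' ≤ ε) :
    infCover φ S ε ≤ infCover φ S ε' :=
  le_iInf₂ fun c hc => iInf₂_le c ⟨fun i => ⟨(hc.1 i).1, (hc.1 i).2.trans h⟩, hc.2⟩

lemma HK_eq_iSup_nat (φ : ℝ → ℝ) (S : Set (∀ k, Fin (n k))) (k : ℕ) :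
    HK φ S = ⨆ m : ℕ, infCover φ S ((2:ℝ)^(-((k+m:ℕ):ℤ))) := by
  rw [HK_eq]
  apply le_antisymm
  · refine iSup₂_le fun ε hε => ?_
    obtain ⟨N, hN⟩ := exists_pow_lt_of_lt_one hε (by norm_num : (1:ℝ)/2 < 1)
    have hle : (2:ℝ)^(-((k+N:ℕ):ℤ)) ≤ ε := by
      have h1 : (2:ℝ)^(-((k+N:ℕ):ℤ)) = ((1:ℝ)/2)^(k+N) := by
        rw [one_div, inv_pow, ← zpow_natCast, ← zpow_neg]
      rw [h1]
      calc ((1:ℝ)/2)^(k+N) ≤ ((1:ℝ)/2)^N :=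
            pow_le_pow_of_le_one (by norm_num) (by norm_num) (by omega)
        _ ≤ ε := hN.le
    exact le_iSup_of_le N (infCover_anti φ S hle)
  · refine iSup_le fun m => ?_
    exact le_iSup₂_of_le ((2:ℝ)^(-((k+m:ℕ):ℤ))) (by positivity) le_rfl

lemma infCover_cylSet_le (φ : ℝ → ℝ) (x x' : ∀ k, Fin (n k)) (k : ℕ) {ε : ℝ}
    (hε : ε ≤ (2:ℝ)^(-(k:ℤ))) :
    infCover φ (cylSet x' k) ε ≤ infCover φ (cylSet x k) ε := by
  refine le_iInf₂ fun c hc => ?_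
  refine iInf₂_le (fun i => (pre x' k (c i).1, (c i).2)) ⟨hc.1, ?_⟩
  intro y hy
  have hz : pre x k y ∈ cylSet x k := fun j hj => if_pos hj
  obtain ⟨i, hi⟩ := Set.mem_iUnion.1 (hc.2 hz)
  refine Set.mem_iUnion.2 ⟨i, ?_⟩
  have hpref : ∀ j < k, (pre x k y) j = (c i).1 j :=
    mem_ball_prefix (le_trans (hc.1 i).2 hε) hi
  have h1 : deltaK (pre x' k (c i).1) (pre x' k (pre x k y)) = deltaK (c i).1 (pre x k y) :=
    deltaK_pre x' (fun j hj => (hpref j hj).symm)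
  have h2 : pre x' k (pre x k y) = y := funext fun j => by
    by_cases h : j < k <;> simp [pre, h, hy j]
  show deltaK (pre x' k (c i).1) y < (c i).2
  rw [← h2, h1]
  exact hi

lemma infCover_cylSet_eq (φ : ℝ → ℝ) (x x' : ∀ k, Fin (n k)) (k : ℕ) {ε : ℝ}
    (hε : ε ≤ (2:ℝ)^(-(k:ℤ))) :
    infCover φ (cylSet x' k) ε = infCover φ (cylSet x k) ε :=
  le_antisymm (infCover_cylSet_le φ x x' k hε) (infCover_cylSet_le φ x' x k hε)

def extendK (hn : ∀ k, 0 < n k) {k : ℕ} (s : ∀ j : Fin k, Fin (n (j:ℕ))) : ∀ k, Fin (n k) :=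
  fun j => if h : j < k then s ⟨j, h⟩ else ⟨0, hn j⟩

lemma mem_cyl_extendK (hn : ∀ k, 0 < n k) {k : ℕ} (y : ∀ k, Fin (n k)) :
    y ∈ cylSet (extendK hn (fun j : Fin k => y (j:ℕ))) k := by
  intro j hj
  simp [extendK, hj]

lemma sum_le_infCover_univ (hn : ∀ k, 0 < n k) (φ : ℝ → ℝ) (hφ0 : φ 0 = 0) (k : ℕ) {ε : ℝ}
    (hε0 : 0 ≤ ε) (hε : ε ≤ (2:ℝ)^(-(k:ℤ))) :
    ∑ s : (∀ j : Fin k, Fin (n (j:ℕ))), infCover φ (cylSet (extendK hn s) k) ε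
      ≤ infCover (n := n) φ Set.univ ε := by
  refine le_iInf₂ fun c hc => ?_
  have key : ∀ s : (∀ j : Fin k, Fin (n (j:ℕ))),
      infCover φ (cylSet (extendK hn s) k) ε
        ≤ ∑' i, ENNReal.ofReal (φ (if (fun j : Fin k => (c i).1 (j:ℕ)) = s then (c i).2 else 0)) := by
    intro s
    have step : infCover φ (cylSet (extendK hn s) k) ε
        ≤ ∑' i, ENNReal.ofReal
            (φ ((if (fun j : Fin k => (c i).1 (j:ℕ)) = s then c i else ((c i).1, 0)).2)) := by
      refine iInf₂_le (fun i => if (fun j : Fin k => (c i).1 (j:ℕ)) = s then c i else ((c i).1, 0))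
        ⟨?_, ?_⟩
      · intro i
        by_cases h : (fun j : Fin k => (c i).1 (j:ℕ)) = s
        · simpa [h] using hc.1 i
        · simp [h, hε0]
      · intro y hy
        obtain ⟨i, hi⟩ := Set.mem_iUnion.1 (hc.2 (Set.mem_univ y))
        have hpre : ∀ j < k, y j = (c i).1 j := mem_ball_prefix (le_trans (hc.1 i).2 hε) hi
        have hcli : (fun j : Fin k => (c i).1 (j:ℕ)) = s := by
          funext j
          have h2 : y (j:ℕ) = extendK hn s (j:ℕ) := hy (j:ℕ) j.2
          rw [← hpre (j:ℕ) j.2, h2]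
          simp [extendK, j.2]
        exact Set.mem_iUnion.2 ⟨i, by simp only [if_pos hcli]; exact hi⟩
    refine step.trans (le_of_eq (tsum_congr fun i => ?_))
    by_cases h : (fun j : Fin k => (c i).1 (j:ℕ)) = s <;> simp [h]
  calc ∑ s : (∀ j : Fin k, Fin (n (j:ℕ))), infCover φ (cylSet (extendK hn s) k) ε
      ≤ ∑ s : (∀ j : Fin k, Fin (n (j:ℕ))), ∑' i,
          ENNReal.ofReal (φ (if (fun j : Fin k => (c i).1 (j:ℕ)) = s then (c i).2 else 0)) :=
        Finset.sum_le_sum fun s _ => key s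
    _ = ∑' i, ∑ s : (∀ j : Fin k, Fin (n (j:ℕ))),
          ENNReal.ofReal (φ (if (fun j : Fin k => (c i).1 (j:ℕ)) = s then (c i).2 else 0)) :=
        (Summable.tsum_finsetSum fun _ _ => ENNReal.summable).symm
    _ = ∑' i, ENNReal.ofReal (φ (c i).2) := by
        refine tsum_congr fun i => ?_
        have : ∀ s : (∀ j : Fin k, Fin (n (j:ℕ))),
            ENNReal.ofReal (φ (if (fun j : Fin k => (c i).1 (j:ℕ)) = s then (c i).2 else 0))
              = if (fun j : Fin k => (c i).1 (j:ℕ)) = s then ENNReal.ofReal (φ (c i).2) else 0 := by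
          intro s
          by_cases h : (fun j : Fin k => (c i).1 (j:ℕ)) = s <;> simp [h, hφ0]
        rw [Finset.sum_congr rfl fun s _ => this s]
        exact Finset.sum_ite_eq Finset.univ _ _ |>.trans (by simp)

lemma infCover_univ_le (hn : ∀ k, 0 < n k) (φ : ℝ → ℝ) (k : ℕ) {ε : ℝ} :
    infCover (n := n) φ Set.univ ε
      ≤ ∑ s : (∀ j : Fin k, Fin (n (j:ℕ))), infCover φ (cylSet (extendK hn s) k) ε := by
  by_cases hfin : ∀ s : (∀ j : Fin k, Fin (n (j:ℕ))),
      infCover φ (cylSet (extendK hn s) k) ε ≠ ⊤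
  swap
  · push_neg at hfin
    obtain ⟨s, hs⟩ := hfin
    have : ∑ s : (∀ j : Fin k, Fin (n (j:ℕ))), infCover φ (cylSet (extendK hn s) k) ε = ⊤ :=
      ENNReal.sum_eq_top.2 ⟨s, Finset.mem_univ s, hs⟩
    simp [this]
  refine ENNReal.le_of_forall_pos_le_add fun δ hδ _ => ?_
  haveI : Nonempty (∀ j : Fin k, Fin (n (j:ℕ))) := ⟨fun j => ⟨0, hn j⟩⟩
  set N := Fintype.card (∀ j : Fin k, Fin (n (j:ℕ))) with hN
  haveI : NeZero N := ⟨Fintype.card_ne_zero⟩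
  set η := (δ : ℝ≥0∞) / N with hη
  have hη0 : 0 < η := ENNReal.div_pos (ENNReal.coe_ne_zero.2 hδ.ne') (ENNReal.natCast_ne_top N)
  have hch : ∀ s : (∀ j : Fin k, Fin (n (j:ℕ))), ∃ c : ℕ → (∀ k, Fin (n k)) × ℝ,
      ((∀ i, 0 ≤ (c i).2 ∧ (c i).2 ≤ ε) ∧
        cylSet (extendK hn s) k ⊆ ⋃ i, BallK (c i).1 (c i).2) ∧
      ∑' i, ENNReal.ofReal (φ (c i).2) ≤ infCover φ (cylSet (extendK hn s) k) ε + η := by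
    intro s
    have hlt : infCover φ (cylSet (extendK hn s) k) ε
        < infCover φ (cylSet (extendK hn s) k) ε + η :=
      ENNReal.lt_add_right (hfin s) hη0.ne'
    conv_lhs at hlt => rw [infCover]
    rw [iInf_lt_iff] at hlt
    obtain ⟨c, hc⟩ := hlt
    rw [iInf_lt_iff] at hc
    obtain ⟨h1, h2⟩ := hc
    exact ⟨c, h1, h2.le⟩
  choose cs hcs1 hcs2 using hch
  set e := Fintype.equivFin (∀ j : Fin k, Fin (n (j:ℕ))) with he
  set dm := Nat.divModEquiv N with hdm
  set C : ℕ → (∀ k, Fin (n k)) × ℝ := fun i => cs (e.symm (dm i).2) (dm i).1 with hC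
  have hcover : (Set.univ : Set (∀ k, Fin (n k))) ⊆ ⋃ i, BallK (C i).1 (C i).2 := by
    intro y _
    have hy := mem_cyl_extendK hn (k := k) y
    obtain ⟨q, hq⟩ := Set.mem_iUnion.1 ((hcs1 _).2 hy)
    refine Set.mem_iUnion.2 ⟨dm.symm (q, e (fun j : Fin k => y (j:ℕ))), ?_⟩
    simp only [hC, Equiv.apply_symm_apply, Equiv.symm_apply_apply]
    exact hq
  have hbound : infCover (n := n) φ Set.univ ε ≤ ∑' i, ENNReal.ofReal (φ (C i).2) :=
    iInf₂_le C ⟨fun i => (hcs1 _).1 _, hcover⟩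
  have hsum : ∑' i, ENNReal.ofReal (φ (C i).2)
      = ∑ s : (∀ j : Fin k, Fin (n (j:ℕ))), ∑' q, ENNReal.ofReal (φ (cs s q).2) := by
    calc ∑' i, ENNReal.ofReal (φ (C i).2)
        = ∑' p : ℕ × Fin N, ENNReal.ofReal (φ (cs (e.symm p.2) p.1).2) :=
          dm.tsum_eq (fun p : ℕ × Fin N => ENNReal.ofReal (φ (cs (e.symm p.2) p.1).2))
      _ = ∑' q : ℕ, ∑' b : Fin N, ENNReal.ofReal (φ (cs (e.symm b) q).2) := ENNReal.tsum_prod (f := fun q b => ENNReal.ofReal (φ (cs (e.symm b) q).2))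
      _ = ∑' b : Fin N, ∑' q : ℕ, ENNReal.ofReal (φ (cs (e.symm b) q).2) := ENNReal.tsum_comm
      _ = ∑ b : Fin N, ∑' q : ℕ, ENNReal.ofReal (φ (cs (e.symm b) q).2) := tsum_fintype _
      _ = ∑ s : (∀ j : Fin k, Fin (n (j:ℕ))), ∑' q, ENNReal.ofReal (φ (cs s q).2) :=
          Equiv.sum_comp e.symm (fun s => ∑' q, ENNReal.ofReal (φ (cs s q).2))
  calc infCover (n := n) φ Set.univ ε
      ≤ ∑ s : (∀ j : Fin k, Fin (n (j:ℕ))), ∑' q, ENNReal.ofReal (φ (cs s q).2) :=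
        hbound.trans (le_of_eq hsum)
    _ ≤ ∑ s : (∀ j : Fin k, Fin (n (j:ℕ))),
          (infCover φ (cylSet (extendK hn s) k) ε + η) :=
        Finset.sum_le_sum fun s _ => hcs2 s
    _ = (∑ s : (∀ j : Fin k, Fin (n (j:ℕ))), infCover φ (cylSet (extendK hn s) k) ε)
          + N * η := by
        rw [Finset.sum_add_distrib, Finset.sum_const, Finset.card_univ, ← hN, nsmul_eq_mul]
    _ ≤ (∑ s : (∀ j : Fin k, Fin (n (j:ℕ))), infCover φ (cylSet (extendK hn s) k) ε) + δ :=
        add_le_add le_rfl (by rw [hη]; exact ENNReal.mul_div_le)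

lemma ball_eq_cyl (x : ∀ k, Fin (n k)) {r : ℝ} (hr : 0 < r) :
    ∃ k, BallK x r = cylSet x k := by
  have hex : ∃ m : ℕ, (2:ℝ)^(-((m:ℤ)+1)) < r := by
    obtain ⟨N, hN⟩ := exists_pow_lt_of_lt_one hr (by norm_num : (1:ℝ)/2 < 1)
    refine ⟨N, lt_of_le_of_lt ?_ hN⟩
    have h1 : (2:ℝ)^(-((N:ℤ)+1)) = ((1:ℝ)/2)^(N+1) := by
      rw [one_div, inv_pow, ← zpow_natCast, ← zpow_neg]
      push_cast; ring_nf
    rw [h1]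
    exact pow_le_pow_of_le_one (by norm_num) (by norm_num) (by omega)
  set k := Nat.find hex with hk
  have hPk : (2:ℝ)^(-((k:ℤ)+1)) < r := Nat.find_spec hex
  refine ⟨k, ?_⟩
  rw [← ballK_zpow]
  ext y
  show deltaK x y < r ↔ deltaK x y < (2:ℝ)^(-(k:ℤ))
  rcases eq_or_ne x y with h | h
  · subst h
    have h0 : deltaK x x = 0 := by simp [deltaK]
    rw [h0]
    exact iff_of_true hr (by positivity)
  · rw [deltaK, if_neg h]
    have hd : sInf {j | x j ≠ y j} ∈ {j | x j ≠ y j} := Nat.sInf_mem (diff_nonempty h)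
    set d := sInf {j | x j ≠ y j} with hdd
    have hchi : (-(chiK x y : ℤ)) = -((d:ℤ)+1) := by
      unfold chiK; rw [← hdd]; push_cast; ring
    rw [hchi]
    constructor
    · intro hlt
      have hkd : k ≤ d := Nat.find_min' hex hlt
      rw [zpow_lt_zpow_iff_right₀ (by norm_num : (1:ℝ) < 2)]
      omega
    · intro hlt
      rw [zpow_lt_zpow_iff_right₀ (by norm_num : (1:ℝ) < 2)] at hlt
      have hkd : k ≤ d := by omega
      refine lt_of_le_of_lt ?_ hPk
      apply zpow_le_zpow_right₀ (by norm_num : (1:ℝ) ≤ 2)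
      omega

lemma HK_univ_eq (hn : ∀ k, 0 < n k) (φ : ℝ → ℝ) (hφ0 : φ 0 = 0)
    (x : ∀ k, Fin (n k)) (k : ℕ) :
    HK (n := n) φ Set.univ
      = (∏ j ∈ Finset.range k, (n j : ℝ≥0∞)) * HK φ (cylSet x k) := by
  have hcard : (Fintype.card (∀ j : Fin k, Fin (n (j:ℕ))) : ℝ≥0∞)
      = ∏ j ∈ Finset.range k, (n j : ℝ≥0∞) := by
    rw [Fintype.card_pi]
    simp only [Fintype.card_fin]
    rw [← Fin.prod_univ_eq_prod_range (fun j => (n j : ℝ≥0∞)) k]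
    push_cast
    rfl
  rw [HK_eq_iSup_nat φ Set.univ k, HK_eq_iSup_nat φ (cylSet x k) k]
  have hstep : ∀ m : ℕ, infCover (n := n) φ Set.univ ((2:ℝ)^(-((k+m:ℕ):ℤ)))
      = (∏ j ∈ Finset.range k, (n j : ℝ≥0∞)) *
        infCover φ (cylSet x k) ((2:ℝ)^(-((k+m:ℕ):ℤ))) := by
    intro m
    set ε := (2:ℝ)^(-((k+m:ℕ):ℤ)) with hε'
    have hε0 : (0:ℝ) < ε := by positivity
    have hεle : ε ≤ (2:ℝ)^(-(k:ℤ)) := by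
      apply zpow_le_zpow_right₀ (by norm_num : (1:ℝ) ≤ 2)
      push_cast; omega
    have h1 : infCover (n := n) φ Set.univ ε
        = ∑ s : (∀ j : Fin k, Fin (n (j:ℕ))), infCover φ (cylSet (extendK hn s) k) ε :=
      le_antisymm (infCover_univ_le hn φ k)
        (sum_le_infCover_univ hn φ hφ0 k hε0.le hεle)
    rw [h1]
    have h2 : ∀ s : (∀ j : Fin k, Fin (n (j:ℕ))),
        infCover φ (cylSet (extendK hn s) k) ε = infCover φ (cylSet x k) ε := fun s =>
      infCover_cylSet_eq φ x (extendK hn s) k hεle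
    rw [Finset.sum_congr rfl fun s _ => h2 s, Finset.sum_const, Finset.card_univ,
      nsmul_eq_mul, hcard]
  rw [iSup_congr hstep, ENNReal.mul_iSup]


/-- If the upper `φ`-density of the equilibrium state is a positive finite constant, then
for every ball `B` of positive radius, `H^φ(B) = H^φ(K) ⬝ μ(B)`. -/
theorem stmt13 (n : ℕ → ℕ) (hn : ∀ k, 0 < n k) (μ : Measure (∀ k, Fin (n k)))
    (hμ : IsEquilibrium μ) (φ : ℝ → ℝ) (hφ : IsHausdorffFn φ)
    (D : ℝ≥0∞) (hD : ∀ x, upperDensK μ φ x = D) (hD0 : 0 < D) (hDtop : D < ⊤) :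
    ∀ (x : ∀ k, Fin (n k)) (r : ℝ), 0 < r →
      HK φ (BallK x r) = HK φ (Set.univ : Set (∀ k, Fin (n k))) * μ (BallK x r) := by
  intro x r hr
  obtain ⟨k, hball⟩ := ball_eq_cyl x hr
  have hφ0 : φ 0 = 0 := hφ.2.2.1
  set P := ∏ j ∈ Finset.range k, ((n j : ℝ≥0∞)) with hP
  have hP0 : P ≠ 0 := by
    rw [hP]
    exact Finset.prod_ne_zero_iff.2 fun j _ => by exact_mod_cast (hn j).ne'
  have hPtop : P ≠ ⊤ := by
    rw [hP]
    exact (ENNReal.prod_lt_top fun j _ => ENNReal.natCast_lt_top _).ne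
  have hμB : μ (BallK x r) = P⁻¹ := by
    rw [hball]
    show μ {y | ∀ j < k, y j = x j} = P⁻¹
    rw [hμ k x, hP,
      ENNReal.prod_inv_distrib fun i _ j _ _ => Or.inl (by exact_mod_cast (hn i).ne')]
  have hHK : HK (n := n) φ Set.univ = P * HK φ (cylSet x k) := HK_univ_eq hn φ hφ0 x k
  rw [hμB, hball, hHK, mul_comm P (HK φ (cylSet x k)), mul_assoc,
    ENNReal.mul_inv_cancel hP0 hPtop, mul_one]
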